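/- Let p be a prime, ν a natural number and m an integer. Let N be the number of quadruples (x₁,y₁,x₂,y₂) ∈ (ℤ/p^νℤ)⁴ with x₁·y₁ + x₂·y₂ = m (mod p^ν). Then 1 − p^{−2} ≤ p^{−3ν}·N ≤ 1 + p^{−1}. -/

import Mathlib

open ZMod

section
variable (p : ℕ)

/-- number of solutions of `x₁y₁+x₂y₂ = m` in `ZMod k`. -/
private noncomputable def solN (k : ℕ) (m : ℤ) : ℕ :=
  Nat.card {v : ZMod k × ZMod k × ZMod k × ZMod k //
    v.1 * v.2.1 + v.2.2.1 * v.2.2.2 = (m : ZMod k)}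

private lemma card_split {α : Type*} [Fintype α] (Q C : α → Prop) :
    Nat.card {x // Q x} = Nat.card {x // Q x ∧ C x} + Nat.card {x // Q x ∧ ¬ C x} := by
  classical
  simp only [Nat.card_eq_fintype_card, Fintype.card_subtype]
  rw [← Finset.card_filter_add_card_filter_not (s := Finset.univ.filter Q) (p := C)]
  congr 1 <;> rw [Finset.filter_filter]

private noncomputable def unitsEquiv (M : Type*) [Monoid M] : Mˣ ≃ {x : M // IsUnit x} where
  toFun u := ⟨u, u.isUnit⟩
  invFun x := x.2.unit
  left_inv u := Units.ext u.isUnit.unit_spec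
  right_inv x := Subtype.ext x.2.unit_spec

private lemma card_units_zmod (n : ℕ) [NeZero n] :
    Nat.card {x : ZMod n // IsUnit x} = n.totient := by
  rw [← Nat.card_congr (unitsEquiv (ZMod n)), Nat.card_eq_fintype_card,
    ZMod.card_units_eq_totient]

private lemma card_nonunits_zmod (n : ℕ) [NeZero n] :
    Nat.card {x : ZMod n // ¬ IsUnit x} = n - n.totient := by
  classical
  rw [Nat.card_eq_fintype_card, Fintype.card_subtype_compl, ZMod.card,
    ← Nat.card_eq_fintype_card, card_units_zmod]


end

open ZMod

section
variable (p : ℕ)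

private def lowH (n : ℕ) : ZMod (p^(n+1)) →+* ZMod (p^n) :=
  ZMod.castHom (pow_dvd_pow p n.le_succ) _

private noncomputable def dig (n : ℕ) (x : ZMod (p^(n+1))) : ZMod p :=
  ((x.val / p^n : ℕ) : ZMod p)

private noncomputable def glue (n : ℕ) (a : ZMod (p^n)) (b : ZMod p) : ZMod (p^(n+1)) :=
  ((a.val + p^n * b.val : ℕ) : ZMod (p^(n+1)))

private noncomputable def psi (n : ℕ) (u : ZMod (p^n)) : ZMod (p^(n+1)) :=
  ((p * u.val : ℕ) : ZMod (p^(n+1)))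

private noncomputable def unpsi (n : ℕ) (y : ZMod (p^(n+1))) : ZMod (p^n) :=
  ((y.val / p : ℕ) : ZMod (p^n))

variable (hp : p.Prime)
include hp

private lemma nz (k : ℕ) : NeZero (p^k) := ⟨pow_ne_zero _ hp.pos.ne'⟩

private lemma lowH_val (n : ℕ) (x : ZMod (p^(n+1))) :
    lowH p n x = ((x.val : ℕ) : ZMod (p^n)) := by
  haveI := nz p hp (n+1)
  rw [lowH, ZMod.castHom_apply, ← ZMod.natCast_val]

private lemma pzero (n : ℕ) (z : ZMod (p^(n+1))) :
    (p : ZMod (p^(n+1))) * z = 0 ↔ lowH p n z = 0 := by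
  haveI := nz p hp (n+1); haveI := nz p hp n
  rw [lowH_val p hp]
  conv_lhs => rw [show (p : ZMod (p^(n+1))) * z = ((p * z.val : ℕ) : ZMod (p^(n+1))) by
    rw [Nat.cast_mul, ZMod.natCast_zmod_val]]
  rw [ZMod.natCast_eq_zero_iff, ZMod.natCast_eq_zero_iff]
  have h : p^(n+1) = p * p^n := pow_succ' p n
  generalize z.val = a
  rw [h, Nat.mul_dvd_mul_iff_left hp.pos]

private lemma pinj (n : ℕ) (z w : ZMod (p^(n+1))) :
    (p : ZMod (p^(n+1))) * z = (p : ZMod (p^(n+1))) * w ↔ lowH p n z = lowH p n w := by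
  rw [← sub_eq_zero, ← mul_sub, pzero p hp, map_sub, sub_eq_zero]

private lemma glue_val (n : ℕ) (a : ZMod (p^n)) (b : ZMod p) :
    (glue p n a b).val = a.val + p^n * b.val := by
  haveI := nz p hp (n+1); haveI := nz p hp n; haveI : NeZero p := ⟨hp.pos.ne'⟩
  rw [glue, ZMod.val_natCast_of_lt]
  have h1 : a.val < p^n := a.val_lt
  have h2 : b.val < p := b.val_lt
  calc a.val + p^n * b.val < p^n + p^n * b.val := by omega
    _ ≤ p^n + p^n * (p-1) := by have : b.val ≤ p - 1 := by omega
                                exact Nat.add_le_add_left (Nat.mul_le_mul_left _ this) _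
    _ ≤ p^(n+1) := by
        obtain ⟨r, rfl⟩ : ∃ r, p = r + 1 := ⟨p - 1, by have := hp.pos; omega⟩
        simp only [Nat.add_sub_cancel, pow_succ]
        exact Nat.le_of_eq (by ring)

private lemma low_glue (n : ℕ) (a : ZMod (p^n)) (b : ZMod p) :
    lowH p n (glue p n a b) = a := by
  haveI := nz p hp (n+1); haveI := nz p hp n
  rw [lowH_val p hp, glue_val p hp, Nat.cast_add, Nat.cast_mul, ZMod.natCast_self,
    zero_mul, add_zero, ZMod.natCast_zmod_val]

private lemma dig_glue (n : ℕ) (a : ZMod (p^n)) (b : ZMod p) :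
    dig p n (glue p n a b) = b := by
  haveI := nz p hp (n+1); haveI := nz p hp n; haveI : NeZero p := ⟨hp.pos.ne'⟩
  rw [dig, glue_val p hp, Nat.add_mul_div_left _ _ (pow_pos hp.pos n),
    Nat.div_eq_of_lt a.val_lt, zero_add, ZMod.natCast_zmod_val]

private lemma glue_low_dig (n : ℕ) (x : ZMod (p^(n+1))) :
    glue p n (lowH p n x) (dig p n x) = x := by
  haveI := nz p hp (n+1); haveI := nz p hp n; haveI : NeZero p := ⟨hp.pos.ne'⟩
  have hx : x.val < p^(n+1) := x.val_lt
  have hdig : (dig p n x).val = x.val / p^n := by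
    rw [dig, ZMod.val_natCast, Nat.mod_eq_of_lt]
    rw [Nat.div_lt_iff_lt_mul (pow_pos hp.pos n)]
    rw [← pow_succ']
    exact hx
  have hlow : (lowH p n x).val = x.val % p^n := by
    rw [lowH_val p hp, ZMod.val_natCast]
  rw [glue, hdig, hlow, Nat.mod_add_div, ZMod.natCast_zmod_val]

end

section
variable (p : ℕ) (hp : p.Prime)
include hp

private lemma psi_eq (n : ℕ) (u : ZMod (p^n)) :
    psi p n u = (p : ZMod (p^(n+1))) * ((u.val : ℕ) : ZMod (p^(n+1))) := by
  rw [psi, Nat.cast_mul]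

private lemma psi_nonunit (n : ℕ) (u : ZMod (p^n)) : ¬ IsUnit (psi p n u) := by
  rw [psi, ZMod.isUnit_iff_coprime]
  intro h
  have hd : p ∣ Nat.gcd (p * u.val) (p^(n+1)) :=
    Nat.dvd_gcd (dvd_mul_right _ _) (dvd_pow_self p (Nat.succ_ne_zero n))
  rw [Nat.Coprime] at h
  rw [h] at hd
  exact hp.one_lt.ne' (Nat.le_antisymm (Nat.le_of_dvd one_pos hd) hp.one_lt.le)

private lemma nonunit_dvd (n : ℕ) (y : ZMod (p^(n+1))) (h : ¬ IsUnit y) : p ∣ y.val := by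
  haveI := nz p hp (n+1)
  by_contra hnd
  apply h
  have := ((Nat.Prime.coprime_iff_not_dvd hp).mpr hnd).symm.pow_right (n+1)
  rw [← ZMod.natCast_zmod_val y, ZMod.isUnit_iff_coprime]
  exact this

private lemma unpsi_psi (n : ℕ) (u : ZMod (p^n)) : unpsi p n (psi p n u) = u := by
  haveI := nz p hp (n+1); haveI := nz p hp n
  have hv : (psi p n u).val = p * u.val := by
    rw [psi, ZMod.val_natCast_of_lt]
    have := u.val_lt
    calc p * u.val < p * p^n := by
          exact (Nat.mul_lt_mul_left hp.pos).mpr this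
      _ = p^(n+1) := (pow_succ' p n).symm
  rw [unpsi, hv, Nat.mul_div_cancel_left _ hp.pos, ZMod.natCast_zmod_val]

private lemma psi_unpsi (n : ℕ) (y : ZMod (p^(n+1))) (h : ¬ IsUnit y) :
    psi p n (unpsi p n y) = y := by
  haveI := nz p hp (n+1); haveI := nz p hp n
  have hdvd := nonunit_dvd p hp n y h
  have h1 : y.val / p < p^n := by
    rw [Nat.div_lt_iff_lt_mul hp.pos, ← pow_succ]
    exact y.val_lt
  have hv : (unpsi p n y).val = y.val / p := by
    rw [unpsi, ZMod.val_natCast_of_lt h1]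
  rw [psi, hv, Nat.mul_div_cancel' hdvd, ZMod.natCast_zmod_val]

private lemma low_cast_val (n : ℕ) (u : ZMod (p^n)) :
    lowH p n ((u.val : ℕ) : ZMod (p^(n+1))) = u := by
  haveI := nz p hp (n+1); haveI := nz p hp n
  rw [lowH_val p hp, ZMod.val_natCast, Nat.mod_eq_of_lt
    (lt_of_lt_of_le u.val_lt (Nat.pow_le_pow_right hp.pos n.le_succ)), ZMod.natCast_zmod_val]

private lemma eq_transfer (n : ℕ) (m' : ℤ) (x t : ZMod (p^(n+1))) (u v : ZMod (p^n)) :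
    x * psi p n u + psi p n v * t = ((p * m' : ℤ) : ZMod (p^(n+1))) ↔
    lowH p n x * u + v * lowH p n t = (m' : ZMod (p^n)) := by
  haveI := nz p hp (n+1); haveI := nz p hp n
  rw [psi_eq p hp, psi_eq p hp]
  have lhs1 : x * ((p : ZMod (p^(n+1))) * ((u.val : ℕ) : ZMod (p^(n+1))))
      + (p : ZMod (p^(n+1))) * ((v.val : ℕ) : ZMod (p^(n+1))) * t
      = (p : ZMod (p^(n+1))) * (x * ((u.val : ℕ) : ZMod (p^(n+1)))
        + ((v.val : ℕ) : ZMod (p^(n+1))) * t) := by ring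
  have rhs1 : ((p * m' : ℤ) : ZMod (p^(n+1)))
      = (p : ZMod (p^(n+1))) * ((m' : ℤ) : ZMod (p^(n+1))) := by push_cast; ring
  rw [lhs1, rhs1, pinj p hp, map_add, map_mul, map_mul, low_cast_val p hp, low_cast_val p hp,
    map_intCast]

end

section
variable {R : Type*} [CommRing R] (c : R)

private noncomputable def e1 :
    {v : R × R × R × R // v.1 * v.2.1 + v.2.2.1 * v.2.2.2 = c ∧ IsUnit v.2.1} ≃
    {y : R // IsUnit y} × R × R where
  toFun v := (⟨v.1.2.1, v.2.2⟩, (v.1.2.2.1, v.1.2.2.2))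
  invFun w := ⟨(↑w.1.2.unit⁻¹ * (c - w.2.1 * w.2.2), w.1.1, w.2.1, w.2.2), by
    refine ⟨?_, w.1.2⟩
    have hu : (w.1.2.unit : R) = w.1.1 := w.1.2.unit_spec
    dsimp only
    calc ↑w.1.2.unit⁻¹ * (c - w.2.1 * w.2.2) * w.1.1 + w.2.1 * w.2.2
        = ↑w.1.2.unit * (↑w.1.2.unit⁻¹ * (c - w.2.1 * w.2.2)) + w.2.1 * w.2.2 := by
          rw [hu]; ring
      _ = (c - w.2.1 * w.2.2) + w.2.1 * w.2.2 := by rw [Units.mul_inv_cancel_left]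
      _ = c := by ring⟩
  left_inv := by
    rintro ⟨⟨x1, y1, x2, y2⟩, heq, hy⟩
    apply Subtype.ext
    dsimp only
    have hd : c - x2 * y2 = x1 * y1 := by rw [← heq]; ring
    have hu : (hy.unit : R) = y1 := hy.unit_spec
    have key : (↑hy.unit⁻¹ : R) * (c - x2 * y2) = x1 := by
      rw [hd]
      have h2 : x1 * y1 = ↑hy.unit * x1 := by rw [hu]; ring
      rw [h2, Units.inv_mul_cancel_left]
    simp only [Prod.mk.injEq, and_true, true_and]
    exact key
  right_inv := by
    rintro ⟨⟨y, hy⟩, b, t⟩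
    rfl

private noncomputable def e2 :
    {v : R × R × R × R //
      v.1 * v.2.1 + v.2.2.1 * v.2.2.2 = c ∧ ¬ IsUnit v.2.1 ∧ IsUnit v.2.2.1} ≃
    {y : R // ¬ IsUnit y} × {x : R // IsUnit x} × R where
  toFun v := (⟨v.1.2.1, v.2.2.1⟩, ⟨v.1.2.2.1, v.2.2.2⟩, v.1.1)
  invFun w := ⟨(w.2.2, w.1.1, w.2.1.1, ↑w.2.1.2.unit⁻¹ * (c - w.2.2 * w.1.1)), by
    refine ⟨?_, w.1.2, w.2.1.2⟩
    have hu : (w.2.1.2.unit : R) = w.2.1.1 := w.2.1.2.unit_spec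
    dsimp only
    calc w.2.2 * w.1.1 + w.2.1.1 * (↑w.2.1.2.unit⁻¹ * (c - w.2.2 * w.1.1))
        = ↑w.2.1.2.unit * (↑w.2.1.2.unit⁻¹ * (c - w.2.2 * w.1.1)) + w.2.2 * w.1.1 := by
          rw [hu]; ring
      _ = (c - w.2.2 * w.1.1) + w.2.2 * w.1.1 := by rw [Units.mul_inv_cancel_left]
      _ = c := by ring⟩
  left_inv := by
    rintro ⟨⟨x1, y1, x2, y2⟩, heq, hy, hx⟩
    apply Subtype.ext
    dsimp only
    have hd : c - x1 * y1 = x2 * y2 := by rw [← heq]; ring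
    have hu : (hx.unit : R) = x2 := hx.unit_spec
    have key : (↑hx.unit⁻¹ : R) * (c - x1 * y1) = y2 := by
      rw [hd]
      have h2 : x2 * y2 = ↑hx.unit * y2 := by rw [hu]
      rw [h2, Units.inv_mul_cancel_left]
    simp only [Prod.mk.injEq, and_true, true_and]
    exact key
  right_inv := by
    rintro ⟨⟨y, hy⟩, ⟨x, hx⟩, t⟩
    rfl

end

section
variable (p : ℕ) (hp : p.Prime)

private noncomputable def eB (n : ℕ) (m' : ℤ) :
    {v : ZMod (p^(n+1)) × ZMod (p^(n+1)) × ZMod (p^(n+1)) × ZMod (p^(n+1)) //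
      v.1 * v.2.1 + v.2.2.1 * v.2.2.2 = ((p * m' : ℤ) : ZMod (p^(n+1))) ∧
      ¬ IsUnit v.2.1 ∧ ¬ IsUnit v.2.2.1} ≃
    (ZMod p × ZMod p) ×
    {w : ZMod (p^n) × ZMod (p^n) × ZMod (p^n) × ZMod (p^n) //
      w.1 * w.2.1 + w.2.2.1 * w.2.2.2 = (m' : ZMod (p^n))} where
  toFun v := ((dig p n v.1.1, dig p n v.1.2.2.2),
    ⟨(lowH p n v.1.1, unpsi p n v.1.2.1, unpsi p n v.1.2.2.1, lowH p n v.1.2.2.2), by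
      have h1 := v.2.2.1
      have h2 := v.2.2.2
      have heq := v.2.1
      rw [← psi_unpsi p hp n _ h1, ← psi_unpsi p hp n _ h2] at heq
      exact (eq_transfer p hp n m' _ _ _ _).mp heq⟩)
  invFun w := ⟨(glue p n w.2.1.1 w.1.1, psi p n w.2.1.2.1, psi p n w.2.1.2.2.1,
      glue p n w.2.1.2.2.2 w.1.2), by
    refine ⟨?_, psi_nonunit p hp n _, psi_nonunit p hp n _⟩
    apply (eq_transfer p hp n m' _ _ _ _).mpr
    rw [low_glue p hp, low_glue p hp]
    exact w.2.2⟩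
  left_inv := by
    rintro ⟨⟨x1, y1, x2, y2⟩, heq, h1, h2⟩
    apply Subtype.ext
    simp only [Prod.mk.injEq]
    exact ⟨glue_low_dig p hp n x1, psi_unpsi p hp n y1 h1, psi_unpsi p hp n x2 h2,
      glue_low_dig p hp n y2⟩
  right_inv := by
    rintro ⟨⟨b1, b2⟩, ⟨⟨a, u, v, c⟩, hw⟩⟩
    simp only [Prod.mk.injEq, Subtype.mk.injEq]
    exact ⟨⟨dig_glue p hp n a b1, dig_glue p hp n c b2⟩,
      low_glue p hp n a b1, unpsi_psi p hp n u, unpsi_psi p hp n v, low_glue p hp n c b2⟩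

include hp in
private lemma card_B_zero (n : ℕ) (m : ℤ) (hm : ¬ (p:ℤ) ∣ m) :
    Nat.card {v : ZMod (p^(n+1)) × ZMod (p^(n+1)) × ZMod (p^(n+1)) × ZMod (p^(n+1)) //
      v.1 * v.2.1 + v.2.2.1 * v.2.2.2 = (m : ZMod (p^(n+1))) ∧
      ¬ IsUnit v.2.1 ∧ ¬ IsUnit v.2.2.1} = 0 := by
  haveI := nz p hp (n+1); haveI : NeZero p := ⟨hp.pos.ne'⟩
  have : IsEmpty {v : ZMod (p^(n+1)) × ZMod (p^(n+1)) × ZMod (p^(n+1)) × ZMod (p^(n+1)) //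
      v.1 * v.2.1 + v.2.2.1 * v.2.2.2 = (m : ZMod (p^(n+1))) ∧
      ¬ IsUnit v.2.1 ∧ ¬ IsUnit v.2.2.1} := by
    constructor
    rintro ⟨⟨x1, y1, x2, y2⟩, heq, h1, h2⟩
    set f := ZMod.castHom (dvd_pow_self p (Nat.succ_ne_zero n)) (ZMod p) with hf
    have hz : ∀ y : ZMod (p^(n+1)), ¬ IsUnit y → f y = 0 := by
      intro y hy
      have : f y = ((y.val : ℕ) : ZMod p) := by
        rw [hf, ZMod.castHom_apply, ← ZMod.natCast_val]
      rw [this, ZMod.natCast_eq_zero_iff]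
      exact nonunit_dvd p hp n y hy
    have := congrArg f heq
    rw [map_add, map_mul, map_mul, hz y1 h1, hz x2 h2, mul_zero, zero_mul, add_zero,
      map_intCast] at this
    exact hm ((ZMod.intCast_zmod_eq_zero_iff_dvd m p).mp this.symm)
  exact Nat.card_of_isEmpty

end

section
variable (p : ℕ) (hp : p.Prime)

private lemma solN_one (m : ℤ) : solN 1 m = 1 := by
  rw [solN, Nat.card_congr (Equiv.subtypeUnivEquiv (fun v => Subsingleton.elim _ _))]
  simp [Nat.card_prod, Nat.card_zmod]

include hp in
private lemma solN_rec (n : ℕ) (m : ℤ) :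
    (solN (p^(n+1)) m : ℤ) = (p:ℤ)^(3*n+3) - (p:ℤ)^(3*n+1) +
      (if (p:ℤ) ∣ m then (p:ℤ)^2 * (solN (p^n) (m / p) : ℤ) else 0) := by
  haveI := nz p hp (n+1); haveI := nz p hp n; haveI : NeZero p := ⟨hp.pos.ne'⟩
  have tot : (p^(n+1)).totient = p^n * (p-1) := by
    rw [Nat.totient_prime_pow hp n.succ_pos]; simp
  have hnu : p^(n+1) - (p^(n+1)).totient = p^n := by
    rw [tot]
    apply Nat.sub_eq_of_eq_add
    obtain ⟨r, hr⟩ : ∃ r, p = r + 1 := ⟨p - 1, by have := hp.pos; omega⟩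
    subst hr
    simp only [Nat.add_sub_cancel]
    ring
  have key := card_split
    (α := ZMod (p^(n+1)) × ZMod (p^(n+1)) × ZMod (p^(n+1)) × ZMod (p^(n+1)))
    (fun v => v.1 * v.2.1 + v.2.2.1 * v.2.2.2 = (m : ZMod (p^(n+1))))
    (fun v => IsUnit v.2.1)
  have key2 := card_split
    (α := ZMod (p^(n+1)) × ZMod (p^(n+1)) × ZMod (p^(n+1)) × ZMod (p^(n+1)))
    (fun v => (v.1 * v.2.1 + v.2.2.1 * v.2.2.2 = (m : ZMod (p^(n+1)))) ∧ ¬ IsUnit v.2.1)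
    (fun v => IsUnit v.2.2.1)
  have c1 : Nat.card {v : ZMod (p^(n+1)) × ZMod (p^(n+1)) × ZMod (p^(n+1)) × ZMod (p^(n+1)) //
      (v.1 * v.2.1 + v.2.2.1 * v.2.2.2 = (m : ZMod (p^(n+1)))) ∧ IsUnit v.2.1}
      = (p^n * (p-1)) * (p^(n+1) * p^(n+1)) := by
    rw [Nat.card_congr (e1 ((m : ZMod (p^(n+1))))), Nat.card_prod, Nat.card_prod,
      Nat.card_zmod, card_units_zmod, tot]
  have c2 : Nat.card {v : ZMod (p^(n+1)) × ZMod (p^(n+1)) × ZMod (p^(n+1)) × ZMod (p^(n+1)) //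
      ((v.1 * v.2.1 + v.2.2.1 * v.2.2.2 = (m : ZMod (p^(n+1)))) ∧ ¬ IsUnit v.2.1)
        ∧ IsUnit v.2.2.1}
      = p^n * ((p^n * (p-1)) * p^(n+1)) := by
    rw [Nat.card_congr (Equiv.subtypeEquivRight (q := fun v =>
      (v.1 * v.2.1 + v.2.2.1 * v.2.2.2 = (m : ZMod (p^(n+1)))) ∧
        ¬ IsUnit v.2.1 ∧ IsUnit v.2.2.1) (fun v => by tauto))]
    rw [Nat.card_congr (e2 ((m : ZMod (p^(n+1))))), Nat.card_prod, Nat.card_prod,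
      Nat.card_zmod, card_units_zmod, card_nonunits_zmod, hnu, tot]
  have c3 : Nat.card {v : ZMod (p^(n+1)) × ZMod (p^(n+1)) × ZMod (p^(n+1)) × ZMod (p^(n+1)) //
      ((v.1 * v.2.1 + v.2.2.1 * v.2.2.2 = (m : ZMod (p^(n+1)))) ∧ ¬ IsUnit v.2.1)
        ∧ ¬ IsUnit v.2.2.1}
      = if (p:ℤ) ∣ m then p^2 * solN (p^n) (m / p) else 0 := by
    rw [Nat.card_congr (Equiv.subtypeEquivRight (q := fun v =>
      (v.1 * v.2.1 + v.2.2.1 * v.2.2.2 = (m : ZMod (p^(n+1)))) ∧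
        ¬ IsUnit v.2.1 ∧ ¬ IsUnit v.2.2.1) (fun v => by tauto))]
    by_cases h : (p:ℤ) ∣ m
    · rw [if_pos h]
      have hc : (m : ZMod (p^(n+1))) = ((↑p * (m / p) : ℤ) : ZMod (p^(n+1))) := by
        rw [Int.mul_ediv_cancel' h]
      rw [Nat.card_congr (Equiv.subtypeEquivRight (q := fun v =>
        (v.1 * v.2.1 + v.2.2.1 * v.2.2.2 = ((↑p * (m / p) : ℤ) : ZMod (p^(n+1)))) ∧
          ¬ IsUnit v.2.1 ∧ ¬ IsUnit v.2.2.1) (fun v => by rw [hc]))]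
      rw [Nat.card_congr (eB p hp n (m / p)), Nat.card_prod, Nat.card_prod,
        Nat.card_zmod, solN]
      ring
    · rw [if_neg h]
      exact card_B_zero p hp n m h
  have total := key
  rw [key2, c1, c2, c3] at total
  simp only [solN] at total ⊢
  rw [total]
  obtain ⟨r, hr⟩ : ∃ r, p = r + 1 := ⟨p - 1, by have := hp.pos; omega⟩
  subst hr
  simp only [Nat.add_sub_cancel]
  by_cases h : ((r+1 : ℕ):ℤ) ∣ m
  · rw [if_pos h, if_pos h]
    push_cast
    ring
  · rw [if_neg h, if_neg h]
    push_cast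
    ring

include hp in
private lemma solN_bounds (ν : ℕ) (m : ℤ) :
    (p:ℤ)^(3*ν+2) ≤ (p:ℤ)^2 * (solN (p^ν) m : ℤ) + (p:ℤ)^(3*ν) ∧
    (p:ℤ) * (solN (p^ν) m : ℤ) ≤ (p:ℤ)^(3*ν+1) + (p:ℤ)^(3*ν) := by
  have hp0 : (0:ℤ) < (p:ℤ) := by exact_mod_cast hp.pos
  induction ν generalizing m with
  | zero => simp [solN_one]
  | succ n ih =>
    rw [solN_rec p hp n m]
    have hQ : (0:ℤ) < (p:ℤ)^(3*n) := pow_pos hp0 _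
    have e1 : (p:ℤ)^(3*(n+1)+2) = (p:ℤ)^(3*n) * (p:ℤ)^5 := by
      rw [show 3*(n+1)+2 = 3*n+5 by ring, pow_add]
    have e2 : (p:ℤ)^(3*(n+1)) = (p:ℤ)^(3*n) * (p:ℤ)^3 := by
      rw [show 3*(n+1) = 3*n+3 by ring, pow_add]
    have e3 : (p:ℤ)^(3*(n+1)+1) = (p:ℤ)^(3*n) * (p:ℤ)^4 := by
      rw [show 3*(n+1)+1 = 3*n+4 by ring, pow_add]
    have e4 : (p:ℤ)^(3*n+3) = (p:ℤ)^(3*n) * (p:ℤ)^3 := pow_add _ _ _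
    have e5 : (p:ℤ)^(3*n+1) = (p:ℤ)^(3*n) * (p:ℤ) := by
      rw [pow_add, pow_one]
    rw [e1, e2, e3, e4, e5]
    by_cases h : (p:ℤ) ∣ m
    · rw [if_pos h]
      obtain ⟨ih1, ih2⟩ := ih (m / p)
      rw [show (3:ℕ)*n+2 = 3*n+2 from rfl] at ih1
      have f1 : (p:ℤ)^(3*n+2) = (p:ℤ)^(3*n) * (p:ℤ)^2 := pow_add _ _ _
      rw [f1] at ih1
      rw [e5] at ih2
      have hs : (0:ℤ) ≤ (solN (p^n) (m / p) : ℤ) := Int.natCast_nonneg _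
      constructor
      · nlinarith [mul_nonneg (mul_nonneg (pow_nonneg hp0.le 2) (pow_nonneg hp0.le 2)) hs]
      · nlinarith [mul_le_mul_of_nonneg_left ih2 (pow_nonneg hp0.le 2),
          mul_pos hQ (pow_pos hp0 2)]
    · rw [if_neg h]
      constructor
      · nlinarith [hQ, pow_pos hp0 3]
      · nlinarith [mul_pos hQ (pow_pos hp0 2), mul_pos hQ (pow_pos hp0 3)]

end

/-- Bounds for the representation numbers of `U ⊕ U = (ℤ⁴, Q = x₁y₁ + x₂y₂)` modulo `p^ν`:
`1 - p⁻² ≤ p^{-3ν} N^{U⊕U}_{m,0}(p^ν) ≤ 1 + p⁻¹`. -/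
theorem repNumber_two_hyperbolic_planes_bounds (p : ℕ) (hp : p.Prime) (ν : ℕ) (m : ℤ) :
    1 - ((p : ℚ) ^ 2)⁻¹ ≤
      ((p : ℚ) ^ (3 * ν))⁻¹ *
        (Nat.card {v : ZMod (p ^ ν) × ZMod (p ^ ν) × ZMod (p ^ ν) × ZMod (p ^ ν) //
          v.1 * v.2.1 + v.2.2.1 * v.2.2.2 = (m : ZMod (p ^ ν))} : ℚ) ∧
    ((p : ℚ) ^ (3 * ν))⁻¹ *
        (Nat.card {v : ZMod (p ^ ν) × ZMod (p ^ ν) × ZMod (p ^ ν) × ZMod (p ^ ν) //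
          v.1 * v.2.1 + v.2.2.1 * v.2.2.2 = (m : ZMod (p ^ ν))} : ℚ)
      ≤ 1 + (p : ℚ)⁻¹ := by
  have hb := solN_bounds p hp ν m
  rw [solN] at hb
  set N : ℚ := (Nat.card {v : ZMod (p ^ ν) × ZMod (p ^ ν) × ZMod (p ^ ν) × ZMod (p ^ ν) //
      v.1 * v.2.1 + v.2.2.1 * v.2.2.2 = (m : ZMod (p ^ ν))} : ℚ) with hN
  have hpp : (0:ℚ) < (p:ℚ) := by exact_mod_cast hp.pos
  have hp2 : (0:ℚ) < (p:ℚ)^2 := pow_pos hpp 2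
  have hQ : (0:ℚ) < (p:ℚ)^(3*ν) := pow_pos hpp _
  have k1 : (p:ℚ)^(3*ν+2) ≤ (p:ℚ)^2 * N + (p:ℚ)^(3*ν) := by rw [hN]; exact_mod_cast hb.1
  have k2 : (p:ℚ) * N ≤ (p:ℚ)^(3*ν+1) + (p:ℚ)^(3*ν) := by rw [hN]; exact_mod_cast hb.2
  constructor
  · rw [inv_mul_eq_div, le_div_iff₀ hQ, sub_mul, one_mul, sub_le_iff_le_add]
    rw [← mul_le_mul_iff_right₀ hp2]
    rw [mul_add, ← mul_assoc, mul_inv_cancel₀ hp2.ne', one_mul]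
    calc (p:ℚ)^2 * (p:ℚ)^(3*ν) = (p:ℚ)^(3*ν+2) := by rw [pow_add]; ring
      _ ≤ (p:ℚ)^2 * N + (p:ℚ)^(3*ν) := k1
  · rw [inv_mul_eq_div, div_le_iff₀ hQ]
    rw [← mul_le_mul_iff_right₀ hpp]
    have e : (p:ℚ) * ((1 + (p:ℚ)⁻¹) * (p:ℚ)^(3*ν)) = (p:ℚ) * (p:ℚ)^(3*ν) + (p:ℚ)^(3*ν) := by
      field_simp
    rw [e]
    calc (p:ℚ) * N ≤ (p:ℚ)^(3*ν+1) + (p:ℚ)^(3*ν) := k2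
      _ = (p:ℚ) * (p:ℚ)^(3*ν) + (p:ℚ)^(3*ν) := by rw [pow_add]; ring
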